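/- Let κ be a regular uncountable cardinal and let x be a bounded operator on ℓ²(κ). Then the set { δ < κ : ℓ²(δ) is an invariant subspace of both x and x* } is closed and unbounded in κ. -/

import Mathlib

noncomputable section

open Set

/-- The Hilbert space ℓ²(o): square-summable families indexed by the ordinals below `o`. -/
abbrev L2 (o : Ordinal) : Type := ↥(lp (fun _ : o.ToType => ℂ) 2)

/-- Bounded linear operators on ℓ²(o). -/
abbrev Bd (o : Ordinal) : Type := L2 o →L[ℂ] L2 o

/-- The ordinal (below `o`) corresponding to an index `i` of ℓ²(o). -/
def ordOf {o : Ordinal} (i : o.ToType) : Ordinal := ((Ordinal.ToType.mk (o := o)).symm i : Ordinal)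

/-- `InvOn o S x` : the closed subspace of ℓ²(o) of functions supported on `S`
is an invariant subspace of `x`. -/
def InvOn (o : Ordinal) (S : Set Ordinal) (x : Bd o) : Prop :=
  ∀ f : L2 o, (∀ i : o.ToType, ordOf i ∉ S → f i = 0) →
    ∀ i : o.ToType, ordOf i ∉ S → x f i = 0

/-- `Dclub o C` (the algebra `D[C]`) is the set of bounded operators `x` on ℓ²(o) such
that for every `α ∈ C`, ℓ²(α) is an invariant subspace of both `x` and its adjoint. -/
def Dclub (o : Ordinal) (C : Set Ordinal) : Set (Bd o) :=
  {x | ∀ α ∈ C, InvOn o (Set.Iio α) x ∧ InvOn o (Set.Iio α) (star x)}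

/-- A club in (the ordinal) `o`: a closed unbounded subset of `o`. -/
def IsClubOrd (o : Ordinal) (C : Set Ordinal) : Prop :=
  C ⊆ Set.Iio o ∧
  (∀ s ⊆ C, s.Nonempty → sSup s < o → sSup s ∈ C) ∧
  (∀ α < o, ∃ β ∈ C, α < β)

/-- The least element of `C` strictly above `α`. -/
def clubSucc (C : Set Ordinal) (α : Ordinal) : Ordinal :=
  sInf {β | β ∈ C ∧ α < β}

/-- `memJ κ x` : the (Hilbert space) dimension of the range of `x` is `< κ`;
equivalently (for uncountable κ), the range of `x` is contained in the closure
of a set of cardinality `< κ`. -/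
def memJ (κ : Cardinal) {o : Ordinal} (x : Bd o) : Prop :=
  ∃ D : Set (L2 o), Cardinal.mk D < κ ∧ Set.range ⇑x ⊆ closure D

lemma ordOf_lt {o : Ordinal} (i : o.ToType) : ordOf i < o :=
  ((Ordinal.ToType.mk (o := o)).symm i).2

lemma ordOf_enum {o β : Ordinal} (h : β < o) :
    ordOf (Ordinal.ToType.mk (o := o) ⟨β, h⟩) = β := by
  simp [ordOf]

lemma enum_ordOf {o : Ordinal} (i : o.ToType) (h : ordOf i < o) :
    Ordinal.ToType.mk (o := o) ⟨ordOf i, h⟩ = i := by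
  simp [ordOf]

/-- Coordinate evaluation as a continuous linear map. -/
def coordCLM {o : Ordinal} (j : o.ToType) : L2 o →L[ℂ] ℂ :=
  LinearMap.mkContinuous
    { toFun := fun f => f j
      map_add' := fun f g => by simp
      map_smul' := fun c f => by simp }
    1 (fun f => by rw [one_mul]; exact lp.norm_apply_le_norm (by norm_num) f j)

@[simp] lemma coordCLM_apply {o : Ordinal} (j : o.ToType) (f : L2 o) :
    coordCLM j f = f j := rfl

lemma lp_single_zero {o : Ordinal} (i : o.ToType) :
    lp.single (E := fun _ : o.ToType => ℂ) 2 i (0 : ℂ) = 0 := by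
  have := lp.single_smul (𝕜 := ℂ) (E := fun _ : o.ToType => ℂ) 2 i (1 : ℂ) (0 : ℂ)
  simpa using this

lemma lp_single_eq_smul {o : Ordinal} (i : o.ToType) (c : ℂ) :
    lp.single (E := fun _ : o.ToType => ℂ) 2 i c
      = c • lp.single (E := fun _ : o.ToType => ℂ) 2 i (1 : ℂ) := by
  have := lp.single_smul (𝕜 := ℂ) (E := fun _ : o.ToType => ℂ) 2 i c (1 : ℂ)
  rw [← this, smul_eq_mul, mul_one]

/-- Key lemma: invariance of ℓ²(δ) follows from the behavior on basis vectors. -/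
lemma invOn_of_single {o : Ordinal} (x : Bd o) (δ : Ordinal)
    (h : ∀ i : o.ToType, ordOf i < δ → ∀ j : o.ToType, ¬ ordOf j < δ →
      x (lp.single 2 i 1) j = 0) : InvOn o (Set.Iio δ) x := by
  intro f hf j hj
  rw [Set.mem_Iio] at hj
  have hs : HasSum (fun i : o.ToType => lp.single 2 i (f i)) f :=
    lp.hasSum_single (by norm_num) f
  have hs2 : HasSum (fun i : o.ToType => coordCLM j (x (lp.single 2 i (f i))))
      (coordCLM j (x f)) := (hs.mapL x).mapL (coordCLM j)
  have hzero : (fun i : o.ToType => coordCLM j (x (lp.single 2 i (f i))))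
      = fun _ => (0 : ℂ) := by
    funext i
    by_cases hi : ordOf i < δ
    · rw [lp_single_eq_smul, map_smul, map_smul, smul_eq_mul]
      have := h i hi j hj
      simp [this]
    · have hfi : f i = 0 := hf i (by simpa using hi)
      rw [hfi, lp_single_zero, map_zero, map_zero]
  rw [hzero] at hs2
  have : coordCLM j (x f) = 0 := hs2.unique hasSum_zero
  simpa using this

/-- Invariance applied to a basis vector. -/
lemma single_entry_zero {o : Ordinal} {x : Bd o} {δ : Ordinal}
    (hI : InvOn o (Set.Iio δ) x) {i j : o.ToType} (hi : ordOf i < δ)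
    (hj : ¬ ordOf j < δ) : x (lp.single 2 i 1) j = 0 := by
  refine hI (lp.single 2 i 1) (fun k hk => ?_) j (by simpa using hj)
  refine lp.single_apply_ne 2 i 1 ?_
  rintro rfl
  exact hk (Set.mem_Iio.2 hi)

/-- Supports of ℓ² vectors are countable. -/
lemma l2_support_countable {o : Ordinal} (g : L2 o) :
    {j : o.ToType | g j ≠ 0}.Countable := by
  have hsum : Summable fun j : o.ToType => ‖g j‖ ^ (2 : ENNReal).toReal :=
    (lp.memℓp g).summable (by norm_num)
  have hc := hsum.countable_support
  refine hc.mono ?_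
  intro j hj
  have : (0:ℝ) < ‖g j‖ := norm_pos_iff.2 hj
  simp only [Function.mem_support]
  positivity

/-- **Lemma.** For κ regular uncountable and any bounded operator `x` on ℓ²(κ), the set
of `δ < κ` such that ℓ²(δ) is invariant under both `x` and `x*` is closed and unbounded
in κ. -/
theorem invariant_set_isClub (κ : Cardinal.{0}) (hreg : κ.IsRegular)
    (hunc : Cardinal.aleph0 < κ) (x : Bd κ.ord) :
    IsClubOrd κ.ord
      {δ | δ < κ.ord ∧ InvOn κ.ord (Set.Iio δ) x ∧ InvOn κ.ord (Set.Iio δ) (star x)} := by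
  refine ⟨fun δ hδ => hδ.1, ?_, ?_⟩
  · -- closed
    rintro s hsub ⟨δ₀, hδ₀⟩ hlt
    have hbdd : BddAbove s := ⟨κ.ord, fun δ hδ => ((hsub hδ).1).le⟩
    have key : ∀ y : Bd κ.ord, (∀ δ ∈ s, InvOn κ.ord (Set.Iio δ) y) →
        InvOn κ.ord (Set.Iio (sSup s)) y := by
      intro y hy
      refine invOn_of_single y (sSup s) (fun i hi j hj => ?_)
      obtain ⟨δ', hδ's, hiδ'⟩ := exists_lt_of_lt_csSup ⟨δ₀, hδ₀⟩ hi
      have hδ'le : δ' ≤ sSup s := le_csSup hbdd hδ's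
      exact single_entry_zero (hy δ' hδ's) hiδ' (fun hc => hj (hc.trans_le hδ'le))
    exact ⟨hlt, key x (fun δ hδ => (hsub hδ).2.1), key (star x) (fun δ hδ => (hsub hδ).2.2)⟩
  · -- unbounded
    intro α hα
    have hord0 : (0 : Ordinal) < κ.ord := (show (0 : Ordinal) ≤ α from zero_le).trans_lt hα
    have hlim : Order.IsSuccLimit κ.ord := Cardinal.isSuccLimit_ord hreg.aleph0_le
    -- supports
    set E : κ.ord.ToType → Set κ.ord.ToType := fun i =>
      {j | x (lp.single 2 i 1) j ≠ 0} ∪ {j | (star x) (lp.single 2 i 1) j ≠ 0} with hE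
    have hEc : ∀ i, (E i).Countable := fun i =>
      (l2_support_countable _).union (l2_support_countable _)
    set reach : κ.ord.ToType → Ordinal := fun i =>
      Ordinal.lsub (fun j : ↥(E i) => ordOf j.1) with hreachdef
    have hreach_lt : ∀ i, reach i < κ.ord := by
      intro i
      haveI := (hEc i).to_subtype
      exact Cardinal.lsub_lt_ord_of_isRegular hreg
        (Cardinal.mk_le_aleph0.trans_lt hunc) (fun j => ordOf_lt _)
    have hreach : ∀ i, ∀ j ∈ E i, ordOf j < reach i := fun i j hj =>
      Ordinal.lt_lsub _ (⟨j, hj⟩ : ↥(E i))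
    set G : Ordinal → Ordinal := fun β =>
      if h : β < κ.ord then reach (Ordinal.ToType.mk (o := κ.ord) ⟨β, h⟩) else 0 with hG
    have hG_lt : ∀ β, G β < κ.ord := by
      intro β
      by_cases h : β < κ.ord
      · simpa [hG, h] using hreach_lt (Ordinal.ToType.mk (o := κ.ord) ⟨β, h⟩)
      · simpa [hG, h] using hord0
    set nextf : Ordinal → Ordinal := fun δ =>
      Ordinal.lsub (fun i : δ.ToType => G (ordOf i)) with hnextf
    have hnext_lt : ∀ δ, δ < κ.ord → nextf δ < κ.ord := by
      intro δ hδ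
      refine Cardinal.lsub_lt_ord_of_isRegular hreg ?_ (fun i => hG_lt _)
      rw [Cardinal.mk_toType]
      exact Cardinal.lt_ord.1 hδ
    have hnext : ∀ δ β, β < δ → G β < nextf δ := by
      intro δ β hβ
      have := Ordinal.lt_lsub (fun i : δ.ToType => G (ordOf i))
        (Ordinal.ToType.mk (o := δ) ⟨β, hβ⟩)
      rwa [ordOf_enum] at this
    -- the iteration
    set seq : ℕ → Ordinal := fun n =>
      Nat.rec (α + 1) (fun _ δ => max (nextf δ) (δ + 1)) n with hseq
    have hseq_lt : ∀ n, seq n < κ.ord := by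
      intro n
      induction n with
      | zero => exact hlim.succ_lt hα
      | succ n ih => exact max_lt (hnext_lt _ ih) (hlim.succ_lt ih)
    have hseq_step : ∀ n, seq n < seq (n + 1) := fun n =>
      (Order.lt_succ _).trans_le (le_max_right _ _)
    set δω := ⨆ n, seq n with hδω
    have hbddseq : BddAbove (Set.range seq) :=
      ⟨κ.ord, by rintro _ ⟨n, rfl⟩; exact (hseq_lt n).le⟩
    have hle : ∀ n, seq n ≤ δω := fun n => le_ciSup hbddseq n
    have hδω_lt : δω < κ.ord := by
      refine Cardinal.iSup_lt_ord_of_isRegular hreg ?_ hseq_lt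
      rw [Cardinal.mk_nat]; exact hunc
    have hαδω : α < δω := ((Order.lt_succ α).trans_le (hle 0))
    -- closure property
    have hclosed : ∀ i : κ.ord.ToType, ordOf i < δω → ∀ j ∈ E i, ordOf j < δω := by
      intro i hi j hj
      obtain ⟨n, hn⟩ := (lt_ciSup_iff hbddseq).1 hi
      have h1 : ordOf j < reach i := hreach i j hj
      have h2 : reach i = G (ordOf i) := by
        simp only [hG]
        rw [dif_pos (ordOf_lt i), enum_ordOf]
      have h3 : G (ordOf i) < nextf (seq n) := hnext _ _ hn
      have h4 : nextf (seq n) ≤ seq (n + 1) := le_max_left _ _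
      exact h1.trans_le ((h2 ▸ (h3.trans_le h4)).le.trans (hle (n+1)))
    refine ⟨δω, ⟨hδω_lt, ?_, ?_⟩, hαδω⟩
    · refine invOn_of_single x δω (fun i hi j hj => ?_)
      by_contra hne
      exact hj (hclosed i hi j (Or.inl hne))
    · refine invOn_of_single (star x) δω (fun i hi j hj => ?_)
      by_contra hne
      exact hj (hclosed i hi j (Or.inr hne))
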